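/- arXiv:1703.08480 — 3 statements merged into one kernel-verified Lean document; each statement's English description precedes it below -/
import Mathlib

section
/- The system y = G_u u + G_d d + G_f f is strongly fault isolable (i.e., S-fault isolable for S = I_{m_f}) if and only if rank [G_d(λ) G_f(λ)] = rank G_d(λ) + m_f (normal ranks over rational functions). -/
/-!
Statement 5: The system y = G_u u + G_d d + G_f f is strongly fault isolable
(S-fault isolable for S = I_{m_f}: a bank of m_f proper stable filters decoupling
u and d, the i-th of which is sensitive to f_i and to no other fault) if and only
if rank [G_d(λ)  G_f(λ)] = rank G_d(λ) + m_f (normal ranks over rational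
functions).
-/

open Matrix Polynomial

noncomputable section

/-- A real rational function is proper. -/
def RatFunc.IsProperR (f : RatFunc ℝ) : Prop :=
  f.num.natDegree ≤ f.denom.natDegree

/-- A real rational function is stable (continuous time). -/
def RatFunc.IsStableR (f : RatFunc ℝ) : Prop :=
  ∀ z : ℂ, (f.denom.map (algebraMap ℝ ℂ)).IsRoot z → z.re < 0

/-- A rational matrix is proper if all its entries are proper. -/
def Matrix.IsProperR {m n : Type*} (G : Matrix m n (RatFunc ℝ)) : Prop :=
  ∀ i j, (G i j).IsProperR

/-- A rational matrix is stable if all its entries are stable. -/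
def Matrix.IsStableR {m n : Type*} (G : Matrix m n (RatFunc ℝ)) : Prop :=
  ∀ i j, (G i j).IsStableR

/-- The `j`-th column of a rational matrix, as a one-column matrix. -/
def colMat {p mf : ℕ} (G : Matrix (Fin p) (Fin mf) (RatFunc ℝ)) (j : Fin mf) :
    Matrix (Fin p) (Fin 1) (RatFunc ℝ) :=
  Matrix.of fun i _ => G i j

section Aux

lemma properStable_aux (q : ℝ[X]) (N : ℕ) (h : q.natDegree ≤ N) :
    (algebraMap ℝ[X] (RatFunc ℝ) q / algebraMap ℝ[X] (RatFunc ℝ) ((X + 1) ^ N)).IsProperR ∧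
    (algebraMap ℝ[X] (RatFunc ℝ) q / algebraMap ℝ[X] (RatFunc ℝ) ((X + 1) ^ N)).IsStableR := by
  set f := algebraMap ℝ[X] (RatFunc ℝ) q / algebraMap ℝ[X] (RatFunc ℝ) ((X + 1) ^ N) with hf
  have hX1 : ((X : ℝ[X]) + 1) ≠ 0 := by
    intro hcon
    have := congrArg natDegree hcon
    rw [natDegree_zero] at this
    have h1 : ((X:ℝ[X]) + 1).natDegree = 1 := by simpa using natDegree_X_add_C (1:ℝ)
    omega
  have hXN : ((X : ℝ[X]) + 1) ^ N ≠ 0 := pow_ne_zero _ hX1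
  have hdvd : f.denom ∣ (X + 1) ^ N := RatFunc.denom_div_dvd q _
  constructor
  · -- proper
    by_cases hq : q = 0
    · subst hq; simp [hf, RatFunc.IsProperR]
    have hdenom0 : f.denom ≠ 0 := f.denom_ne_zero
    have key : f.num * (X + 1) ^ N = q * f.denom := by
      have h1 : algebraMap ℝ[X] (RatFunc ℝ) f.num / algebraMap ℝ[X] (RatFunc ℝ) f.denom = f :=
        RatFunc.num_div_denom f
      have h2 : algebraMap ℝ[X] (RatFunc ℝ) f.num * algebraMap ℝ[X] (RatFunc ℝ) ((X+1)^N)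
          = algebraMap ℝ[X] (RatFunc ℝ) q * algebraMap ℝ[X] (RatFunc ℝ) f.denom := by
        rw [hf] at h1
        rw [div_eq_div_iff (RatFunc.algebraMap_ne_zero hdenom0) (RatFunc.algebraMap_ne_zero hXN)] at h1
        exact h1
      have := h2
      rw [← _root_.map_mul, ← _root_.map_mul] at this
      exact (IsFractionRing.injective ℝ[X] (RatFunc ℝ)) this
    have hnum0 : f.num ≠ 0 := by
      intro h0
      rw [h0, zero_mul] at key
      exact hq (by simpa [hdenom0] using key.symm)
    have hdeg := congrArg natDegree key
    rw [natDegree_mul hnum0 hXN, natDegree_mul hq hdenom0] at hdeg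
    have hNX : ((X : ℝ[X]) + 1).natDegree = 1 := by
      simpa using natDegree_X_add_C (1:ℝ)
    rw [natDegree_pow, hNX, mul_one] at hdeg
    have : f.num.natDegree + N ≤ N + f.denom.natDegree := by omega
    exact Nat.le_of_add_le_add_right (by omega : f.num.natDegree + N ≤ f.denom.natDegree + N)
  · -- stable
    intro z hz
    have hmapdvd : f.denom.map (algebraMap ℝ ℂ) ∣ (((X:ℝ[X]) + 1) ^ N).map (algebraMap ℝ ℂ) :=
      Polynomial.map_dvd _ hdvd
    have hroot : (((X:ℂ[X]) + 1) ^ N).IsRoot z := by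
      obtain ⟨s, hs⟩ := hmapdvd
      have : ((((X:ℝ[X]) + 1) ^ N).map (algebraMap ℝ ℂ)).IsRoot z := by
        rw [hs]; simp [IsRoot, hz.eq_zero]
      simpa [Polynomial.map_pow] using this
    have : (z + 1) ^ N = 0 := by simpa [IsRoot] using hroot
    have hz1 : z = -1 := by
      have := pow_eq_zero_iff' .. |>.mp this |>.1
      linear_combination this
    rw [hz1]; norm_num

lemma exists_scaling {ι : Type*} [Fintype ι] (r : ι → RatFunc ℝ) :
    ∃ c : RatFunc ℝ, c ≠ 0 ∧ ∀ k, (c * r k).IsProperR ∧ (c * r k).IsStableR := by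
  classical
  set d : ℝ[X] := ∏ k : ι, (r k).denom with hd
  have hd0 : d ≠ 0 := Finset.prod_ne_zero_iff.mpr fun k _ => (r k).denom_ne_zero
  have hpoly : ∀ k, ∃ pk : ℝ[X], algebraMap ℝ[X] (RatFunc ℝ) d * r k
      = algebraMap ℝ[X] (RatFunc ℝ) pk := by
    intro k
    obtain ⟨e, he⟩ : (r k).denom ∣ d := Finset.dvd_prod_of_mem _ (Finset.mem_univ k)
    refine ⟨e * (r k).num, ?_⟩
    have hden : algebraMap ℝ[X] (RatFunc ℝ) (r k).denom ≠ 0 :=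
      RatFunc.algebraMap_ne_zero (r k).denom_ne_zero
    set n := (r k).num with hn
    set dn := (r k).denom with hdn
    have hrk : r k = algebraMap ℝ[X] (RatFunc ℝ) n
        / algebraMap ℝ[X] (RatFunc ℝ) dn := (RatFunc.num_div_denom (r k)).symm
    rw [he, _root_.map_mul, _root_.map_mul, hrk]
    have hcalc : ∀ a b cc : RatFunc ℝ, a * b * (cc / a) = b * cc * (a / a) := by
      intros; ring
    rw [hcalc, div_self hden, mul_one]
  choose pk hpk using hpoly
  set N : ℕ := Finset.univ.sup fun k => (pk k).natDegree with hN
  have hX1 : ((X : ℝ[X]) + 1) ≠ 0 := by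
    intro hcon
    have := congrArg natDegree hcon
    rw [natDegree_zero] at this
    have h1 : ((X:ℝ[X]) + 1).natDegree = 1 := by simpa using natDegree_X_add_C (1:ℝ)
    omega
  have hXN : ((X : ℝ[X]) + 1) ^ N ≠ 0 := pow_ne_zero _ hX1
  refine ⟨algebraMap ℝ[X] (RatFunc ℝ) d / algebraMap ℝ[X] (RatFunc ℝ) ((X + 1) ^ N),
    div_ne_zero (RatFunc.algebraMap_ne_zero hd0) (RatFunc.algebraMap_ne_zero hXN), fun k => ?_⟩
  have : algebraMap ℝ[X] (RatFunc ℝ) d / algebraMap ℝ[X] (RatFunc ℝ) ((X + 1) ^ N) * r k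
      = algebraMap ℝ[X] (RatFunc ℝ) (pk k) / algebraMap ℝ[X] (RatFunc ℝ) ((X + 1) ^ N) := by
    rw [div_mul_eq_mul_div, hpk k]
  rw [this]
  exact properStable_aux (pk k) N (Finset.le_sup (f := fun k => (pk k).natDegree) (Finset.mem_univ k))

variable {K : Type*} [Field K]


lemma range_fromColumns {p md mf : ℕ}
    (Gd : Matrix (Fin p) (Fin md) K) (Gf : Matrix (Fin p) (Fin mf) K) :
    LinearMap.range (Matrix.fromCols Gd Gf).mulVecLin
      = LinearMap.range Gd.mulVecLin ⊔ LinearMap.range Gf.mulVecLin := by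
  apply le_antisymm
  · rintro x ⟨v, rfl⟩
    have hv : v = Sum.elim (v ∘ Sum.inl) (v ∘ Sum.inr) := by
      funext x; cases x <;> rfl
    rw [Matrix.mulVecLin_apply, hv, Matrix.fromCols_mulVec_sumElim]
    exact Submodule.add_mem _ (Submodule.mem_sup_left ⟨_, rfl⟩)
      (Submodule.mem_sup_right ⟨_, rfl⟩)
  · rw [sup_le_iff]
    constructor
    · rintro x ⟨u, rfl⟩
      refine ⟨Sum.elim u 0, ?_⟩
      rw [Matrix.mulVecLin_apply, Matrix.fromCols_mulVec_sumElim]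
      simp
    · rintro x ⟨u, rfl⟩
      refine ⟨Sum.elim 0 u, ?_⟩
      rw [Matrix.mulVecLin_apply, Matrix.fromCols_mulVec_sumElim]
      simp

lemma rank_iff_indep {p md mf : ℕ}
    (Gd : Matrix (Fin p) (Fin md) K) (Gf : Matrix (Fin p) (Fin mf) K) :
    (Matrix.fromCols Gd Gf).rank = Gd.rank + mf ↔
      ∀ a : Fin mf → K, Gf.mulVecLin a ∈ LinearMap.range Gd.mulVecLin → a = 0 := by
  classical
  set V := LinearMap.range Gd.mulVecLin with hV
  set W := LinearMap.range Gf.mulVecLin with hW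
  have hrank1 : (Matrix.fromCols Gd Gf).rank = Module.finrank K ↥(V ⊔ W) := by
    rw [Matrix.rank, range_fromColumns]
  have hrank2 : Gd.rank = Module.finrank K ↥V := rfl
  have hWle : Module.finrank K ↥W ≤ mf := by
    have := LinearMap.finrank_range_le Gf.mulVecLin
    rwa [Module.finrank_pi, Fintype.card_fin] at this
  constructor
  · intro h a ha
    rw [hrank1, hrank2] at h
    have hsum := Submodule.finrank_sup_add_finrank_inf_eq V W
    have hinf0 : Module.finrank K ↥(V ⊓ W) = 0 := by omega
    have hWmf : Module.finrank K ↥W = mf := by omega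
    have hinfbot : V ⊓ W = ⊥ := Submodule.finrank_eq_zero.mp hinf0
    have hker : LinearMap.ker Gf.mulVecLin = ⊥ := by
      have := LinearMap.finrank_range_add_finrank_ker Gf.mulVecLin
      rw [Module.finrank_pi, Fintype.card_fin, ← hW, hWmf] at this
      exact Submodule.finrank_eq_zero.mp (by omega)
    have hmem : Gf.mulVecLin a ∈ V ⊓ W := ⟨ha, ⟨a, rfl⟩⟩
    rw [hinfbot, Submodule.mem_bot] at hmem
    exact (LinearMap.ker_eq_bot.mp hker).eq_iff.mp (by simpa using hmem)
  · intro h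
    have hinj : Function.Injective Gf.mulVecLin := by
      rw [← LinearMap.ker_eq_bot, eq_bot_iff]
      intro a ha
      rw [LinearMap.mem_ker] at ha
      have : a = 0 := h a (ha ▸ Submodule.zero_mem V)
      simp [this]
    have hWmf : Module.finrank K ↥W = mf := by
      rw [hW, LinearMap.finrank_range_of_inj hinj, Module.finrank_pi, Fintype.card_fin]
    have hinfbot : V ⊓ W = ⊥ := by
      rw [eq_bot_iff]
      rintro x ⟨hxV, a, rfl⟩
      have : a = 0 := h a hxV
      simp [this]
    have hsum := Submodule.finrank_sup_add_finrank_inf_eq V W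
    rw [hinfbot] at hsum
    simp only [finrank_bot, add_zero] at hsum
    rw [hrank1, hrank2, hsum, hWmf]

set_option synthInstance.maxHeartbeats 400000 in
lemma single_eq_smul_single {F : Type*} [Field F] (x : F) {n : ℕ} (l : Fin n) :
    (Pi.single l x : Fin n → F) = x • (Pi.single l 1 : Fin n → F) := by
  rw [← Pi.single_smul, smul_eq_mul, mul_one]

lemma mul_fromRows_zero_apply {q p mu n : ℕ} (Q : Matrix (Fin q) (Fin p ⊕ Fin mu) K)
    (A : Matrix (Fin p) (Fin n) K) (k : Fin q) (j : Fin n) :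
    (Q * Matrix.fromRows A (0 : Matrix (Fin mu) (Fin n) K)) k j
      = ∑ l, Q k (Sum.inl l) * A l j := by
  rw [Matrix.mul_apply, Fintype.sum_sum_type]
  simp

lemma mul_fromRows_one_apply {q p mu : ℕ} (Q : Matrix (Fin q) (Fin p ⊕ Fin mu) K)
    (A : Matrix (Fin p) (Fin mu) K) (k : Fin q) (j : Fin mu) :
    (Q * Matrix.fromRows A (1 : Matrix (Fin mu) (Fin mu) K)) k j
      = (∑ l, Q k (Sum.inl l) * A l j) + Q k (Sum.inr j) := by
  rw [Matrix.mul_apply, Fintype.sum_sum_type]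
  simp [Matrix.one_apply, mul_ite, Finset.sum_ite_eq']

end Aux

/-- **Characterization of strong fault isolability**. -/
theorem strongly_fault_isolable_iff_rank
    (p mu md mf : ℕ)
    (Gu : Matrix (Fin p) (Fin mu) (RatFunc ℝ))
    (Gd : Matrix (Fin p) (Fin md) (RatFunc ℝ))
    (Gf : Matrix (Fin p) (Fin mf) (RatFunc ℝ)) :
    (∃ (q : Fin mf → ℕ)
        (Q : ∀ i : Fin mf, Matrix (Fin (q i)) (Fin p ⊕ Fin mu) (RatFunc ℝ)),
        ∀ i : Fin mf,
          (Q i).IsProperR ∧ (Q i).IsStableR ∧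
          Q i * Matrix.fromRows Gu (1 : Matrix (Fin mu) (Fin mu) (RatFunc ℝ)) = 0 ∧
          Q i * Matrix.fromRows Gd (0 : Matrix (Fin mu) (Fin md) (RatFunc ℝ)) = 0 ∧
          ∀ j : Fin mf,
            (Q i * Matrix.fromRows (colMat Gf j)
                (0 : Matrix (Fin mu) (Fin 1) (RatFunc ℝ)) ≠ 0 ↔ i = j)) ↔
      (Matrix.fromCols Gd Gf).rank = Gd.rank + mf := by
  classical
  rw [rank_iff_indep]
  constructor
  · -- filters imply independence
    rintro ⟨q, Q, h⟩ a ha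
    by_contra hane
    obtain ⟨i, hai⟩ : ∃ i, a i ≠ 0 := by
      by_contra hc; push_neg at hc; exact hane (funext hc)
    obtain ⟨hP, hS, hQu, hQd, hQf⟩ := h i
    have hne := (hQf i).mpr rfl
    obtain ⟨k, l', hkl⟩ : ∃ k l', (Q i * Matrix.fromRows (colMat Gf i)
        (0 : Matrix (Fin mu) (Fin 1) (RatFunc ℝ))) k l' ≠ 0 := by
      by_contra hc; push_neg at hc
      exact hne (Matrix.ext fun k l' => by rw [hc k l']; rfl)
    set r : Fin p → RatFunc ℝ := fun l => Q i k (Sum.inl l) with hr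
    have hSi : (∑ l, r l * Gf l i) ≠ 0 := by
      rw [mul_fromRows_zero_apply] at hkl
      exact hkl
    have hGdrow : ∀ j, (∑ l, r l * Gd l j) = 0 := by
      intro j
      have := congrFun (congrFun hQd k) j
      rw [mul_fromRows_zero_apply] at this
      simpa using this
    have hGfrow : ∀ j, j ≠ i → (∑ l, r l * Gf l j) = 0 := by
      intro j hji
      have hz : Q i * Matrix.fromRows (colMat Gf j)
          (0 : Matrix (Fin mu) (Fin 1) (RatFunc ℝ)) = 0 := by
        by_contra hc
        exact hji ((hQf j).mp hc).symm
      have := congrFun (congrFun hz k) 0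
      rw [mul_fromRows_zero_apply] at this
      simpa [colMat] using this
    obtain ⟨cvec, hcvec⟩ := ha
    have hswap : ∀ {n : ℕ} (A : Matrix (Fin p) (Fin n) (RatFunc ℝ)) (w : Fin n → RatFunc ℝ),
        (∑ l, r l * (A *ᵥ w) l) = ∑ j, (∑ l, r l * A l j) * w j := by
      intro n A w
      simp only [Matrix.mulVec, dotProduct, Finset.mul_sum, Finset.sum_mul]
      rw [Finset.sum_comm]
      exact Finset.sum_congr rfl fun j _ => Finset.sum_congr rfl fun l _ => by ring
    have hlhs : (∑ l, r l * (Gd *ᵥ cvec) l) = 0 := by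
      rw [hswap]
      exact Finset.sum_eq_zero fun j _ => by rw [hGdrow j, zero_mul]
    have hrhs : (∑ l, r l * (Gf *ᵥ a) l) = (∑ l, r l * Gf l i) * a i := by
      rw [hswap]
      exact Finset.sum_eq_single i (fun j _ hji => by rw [hGfrow j hji, zero_mul])
        (fun hcon => absurd (Finset.mem_univ i) hcon)
    have heq : Gd *ᵥ cvec = Gf *ᵥ a := hcvec
    rw [heq, hrhs] at hlhs
    exact (mul_ne_zero hSi hai) hlhs
  · -- independence implies filters
    intro hP
    have key : ∀ i : Fin mf, ∃ Qi : Matrix (Fin 1) (Fin p ⊕ Fin mu) (RatFunc ℝ),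
        Qi.IsProperR ∧ Qi.IsStableR ∧
        Qi * Matrix.fromRows Gu (1 : Matrix (Fin mu) (Fin mu) (RatFunc ℝ)) = 0 ∧
        Qi * Matrix.fromRows Gd (0 : Matrix (Fin mu) (Fin md) (RatFunc ℝ)) = 0 ∧
        ∀ j : Fin mf,
          (Qi * Matrix.fromRows (colMat Gf j)
              (0 : Matrix (Fin mu) (Fin 1) (RatFunc ℝ)) ≠ 0 ↔ i = j) := by
      intro i
      set V := LinearMap.range Gd.mulVecLin with hV
      set U := V ⊔ Submodule.map Gf.mulVecLin
          (LinearMap.ker (LinearMap.proj i : (Fin mf → RatFunc ℝ) →ₗ[RatFunc ℝ] RatFunc ℝ))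
        with hU
      have hx : Gf.mulVecLin (Pi.single i 1) ∉ U := by
        intro hmem
        rw [hU, Submodule.mem_sup] at hmem
        obtain ⟨v, hv, w, hw, hvw⟩ := hmem
        obtain ⟨b, hb, rfl⟩ := hw
        have hbi : b i = 0 := hb
        have hVsub : Gf.mulVecLin (Pi.single i 1 - b) ∈ V := by
          rw [map_sub, ← hvw]
          simpa using hv
        have h0 := hP _ hVsub
        have := congrFun h0 i
        simp [hbi] at this
      obtain ⟨φ, hφx, hφU⟩ := Submodule.exists_dual_map_eq_bot_of_notMem hx inferInstance
      have hφ0 : ∀ u ∈ U, φ u = 0 := by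
        intro u hu
        have : φ u ∈ Submodule.map φ U := Submodule.mem_map_of_mem hu
        rwa [hφU, Submodule.mem_bot] at this
      set r : Fin p → RatFunc ℝ := fun l => φ (Pi.single l 1) with hr
      have hφr : ∀ v : Fin p → RatFunc ℝ, φ v = ∑ l, v l * r l := by
        intro v
        conv_lhs => rw [← Finset.univ_sum_single v]
        rw [map_sum]
        refine Finset.sum_congr rfl fun l _ => ?_
        set_option synthInstance.maxHeartbeats 1000000 in
          rw [single_eq_smul_single (v l) l, _root_.map_smul, smul_eq_mul]
      set row : (Fin p ⊕ Fin mu) → RatFunc ℝ :=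
        Sum.elim r (fun j => -(∑ l, r l * Gu l j)) with hrow
      obtain ⟨c, hc0, hcps⟩ := exists_scaling row
      refine ⟨Matrix.of fun _ x => c * row x, fun k x => (hcps x).1, fun k x => (hcps x).2,
        ?_, ?_, ?_⟩
      · ext k j
        rw [mul_fromRows_one_apply]
        have : ∀ l, (Matrix.of fun (_ : Fin 1) x => c * row x) k (Sum.inl l) = c * r l := fun l => rfl
        simp only [this, Matrix.of_apply, Matrix.zero_apply]
        rw [hrow]
        simp only [Sum.elim_inr]
        rw [Finset.sum_congr rfl (fun l _ => mul_assoc c (r l) (Gu l j)), ← Finset.mul_sum]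
        ring
      · ext k j
        rw [mul_fromRows_zero_apply]
        have hcol : φ (fun l => Gd l j) = 0 := by
          refine hφ0 _ (Submodule.mem_sup_left ⟨Pi.single j 1, ?_⟩)
          funext l
          simp [Matrix.mulVecLin_apply, Matrix.mulVec_single]
        rw [hφr] at hcol
        have : ∀ l, (Matrix.of fun (_ : Fin 1) x => c * row x) k (Sum.inl l) = c * r l := fun l => rfl
        simp only [this, Matrix.zero_apply]
        rw [Finset.sum_congr rfl (fun l _ => by
          show c * r l * Gd l j = c * (Gd l j * r l); ring), ← Finset.mul_sum, hcol, mul_zero]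
      · intro j
        have hentry : ∀ (k : Fin 1) (l' : Fin 1),
            ((Matrix.of fun (_ : Fin 1) x => c * row x) * Matrix.fromRows (colMat Gf j)
              (0 : Matrix (Fin mu) (Fin 1) (RatFunc ℝ))) k l'
            = c * φ (fun l => Gf l j) := by
          intro k l'
          rw [mul_fromRows_zero_apply, hφr]
          rw [Finset.sum_congr rfl (fun l _ => by
            show c * row (Sum.inl l) * (colMat Gf j) l l' = c * (Gf l j * r l)
            show c * r l * Gf l j = c * (Gf l j * r l); ring), ← Finset.mul_sum]
        constructor
        · intro hne
          by_contra hij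
          apply hne
          ext k l'
          rw [hentry k l']
          have h1 : (Pi.single j 1 : Fin mf → RatFunc ℝ) ∈ LinearMap.ker
              (LinearMap.proj i : (Fin mf → RatFunc ℝ) →ₗ[RatFunc ℝ] RatFunc ℝ) := by
            rw [LinearMap.mem_ker, LinearMap.proj_apply,
              Pi.single_eq_of_ne (fun h => hij (by rw [h]))]
          have h2 : Gf.mulVecLin (Pi.single j 1) = fun l => Gf l j := by
            funext l
            simp [Matrix.mulVecLin_apply, Matrix.mulVec_single]
          have hmem : (fun l => Gf l j) ∈ U :=
            Submodule.mem_sup_right (h2 ▸ Submodule.mem_map_of_mem h1)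
          rw [hφ0 _ hmem, mul_zero]
          simp
        · rintro rfl
          intro h0
          have := congrFun (congrFun h0 0) 0
          rw [hentry 0 0] at this
          have hgf : (fun l => Gf l i) = Gf.mulVecLin (Pi.single i 1) := by
            funext l
            simp [Matrix.mulVecLin_apply, Matrix.mulVec_single]
          rw [hgf] at this
          simp only [Matrix.zero_apply] at this
          exact (mul_ne_zero hc0 hφx) this
    choose Qi hQi using key
    exact ⟨fun _ => 1, Qi, hQi⟩

end
end

section
/- For a given structure matrix S, the strict AFDIP—requiring a stable bank of filters with exactly S_{R_f} = S together with R_w ≈ 0—is solvable if and only if the exact fault detection and isolation problem (EFDIP) for S is solvable, i.e., if and only if the system is S-fault isolable. -/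
/-!
Statement 12: For a given structure matrix S, the strict AFDIP — requiring a
stable bank of filters with exactly S_{R_f} = S together with R_w ≈ 0 — is
solvable if and only if the exact fault detection and isolation problem (EFDIP)
for S is solvable, i.e., if and only if the system is S-fault isolable.
-/

open Matrix Polynomial

noncomputable section

/-- The `H∞`-norm of a real rational matrix. -/
noncomputable def hinfNorm {m n : Type*} [Fintype m] [Fintype n]
    (G : Matrix m n (RatFunc ℝ)) : ℝ :=
  ⨆ ω : ℝ, ⨆ i : m, ⨆ j : n,
    ‖RatFunc.eval (algebraMap ℝ ℂ) (Complex.I * ω) (G i j)‖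

/-- Solvability of the EFDIP for the structure matrix `S` (S-fault isolability):
a bank of `n_b` proper stable filters decoupling `u` and `d`, with stable fault
channels, achieving exactly the structure matrix `S`. -/
def EFDIPSolvable {p mu md mf nb : ℕ}
    (Gu : Matrix (Fin p) (Fin mu) (RatFunc ℝ))
    (Gd : Matrix (Fin p) (Fin md) (RatFunc ℝ))
    (Gf : Matrix (Fin p) (Fin mf) (RatFunc ℝ))
    (S : Fin nb → Fin mf → Bool) : Prop :=
  ∃ (q : Fin nb → ℕ)
    (Q : ∀ i : Fin nb, Matrix (Fin (q i)) (Fin p ⊕ Fin mu) (RatFunc ℝ)),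
    ∀ i : Fin nb,
      (Q i).IsProperR ∧ (Q i).IsStableR ∧
      Q i * Matrix.fromRows Gu (1 : Matrix (Fin mu) (Fin mu) (RatFunc ℝ)) = 0 ∧
      Q i * Matrix.fromRows Gd (0 : Matrix (Fin mu) (Fin md) (RatFunc ℝ)) = 0 ∧
      (Q i * Matrix.fromRows Gf (0 : Matrix (Fin mu) (Fin mf) (RatFunc ℝ))).IsStableR ∧
      ∀ j : Fin mf,
        (Q i * Matrix.fromRows (colMat Gf j)
            (0 : Matrix (Fin mu) (Fin 1) (RatFunc ℝ)) ≠ 0 ↔ S i j = true)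

/-- Solvability of the strict AFDIP for the structure matrix `S`: for every
`ε > 0` there is a bank of proper stable filters decoupling `u` and `d`, with
stable fault and noise channels, achieving exactly `S_{R_f} = S` and noise
channels of `H∞`-norm smaller than `ε`. -/
def StrictAFDIPSolvable {p mu md mf mw nb : ℕ}
    (Gu : Matrix (Fin p) (Fin mu) (RatFunc ℝ))
    (Gd : Matrix (Fin p) (Fin md) (RatFunc ℝ))
    (Gf : Matrix (Fin p) (Fin mf) (RatFunc ℝ))
    (Gw : Matrix (Fin p) (Fin mw) (RatFunc ℝ))
    (S : Fin nb → Fin mf → Bool) : Prop :=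
  ∀ ε : ℝ, 0 < ε →
    ∃ (q : Fin nb → ℕ)
      (Q : ∀ i : Fin nb, Matrix (Fin (q i)) (Fin p ⊕ Fin mu) (RatFunc ℝ)),
      ∀ i : Fin nb,
        (Q i).IsProperR ∧ (Q i).IsStableR ∧
        Q i * Matrix.fromRows Gu (1 : Matrix (Fin mu) (Fin mu) (RatFunc ℝ)) = 0 ∧
        Q i * Matrix.fromRows Gd (0 : Matrix (Fin mu) (Fin md) (RatFunc ℝ)) = 0 ∧
        (Q i * Matrix.fromRows Gf (0 : Matrix (Fin mu) (Fin mf) (RatFunc ℝ))).IsStableR ∧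
        (Q i * Matrix.fromRows Gw (0 : Matrix (Fin mu) (Fin mw) (RatFunc ℝ))).IsStableR ∧
        (∀ j : Fin mf,
          (Q i * Matrix.fromRows (colMat Gf j)
              (0 : Matrix (Fin mu) (Fin 1) (RatFunc ℝ)) ≠ 0 ↔ S i j = true)) ∧
        hinfNorm (Q i * Matrix.fromRows Gw
            (0 : Matrix (Fin mu) (Fin mw) (RatFunc ℝ))) < ε

set_option synthInstance.maxHeartbeats 1000000
set_option maxHeartbeats 1000000

lemma zero_properR : (0 : RatFunc ℝ).IsProperR := by
  simp [RatFunc.IsProperR]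

lemma isProperR_iff {f : RatFunc ℝ} : f.IsProperR ↔ f.intDegree ≤ 0 := by
  rw [RatFunc.intDegree, sub_nonpos, Nat.cast_le]
  exact Iff.rfl

lemma isProperR_mul {f g : RatFunc ℝ} (hf : f.IsProperR) (hg : g.IsProperR) :
    (f * g).IsProperR := by
  rcases eq_or_ne f 0 with rfl | hf0
  · simpa using zero_properR
  rcases eq_or_ne g 0 with rfl | hg0
  · simpa using zero_properR
  rw [isProperR_iff] at hf hg ⊢
  rw [RatFunc.intDegree_mul hf0 hg0]
  omega

lemma stableR_of_dvd {f : RatFunc ℝ} {d : ℝ[X]} (hdvd : f.denom ∣ d)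
    (hd : ∀ z : ℂ, (d.map (algebraMap ℝ ℂ)).IsRoot z → z.re < 0) : f.IsStableR := by
  intro z hz
  apply hd
  obtain ⟨k, hk⟩ := hdvd
  simp only [Polynomial.IsRoot.def] at hz ⊢
  rw [hk, Polynomial.map_mul, Polynomial.eval_mul, hz, zero_mul]

lemma isStableR_mul {f g : RatFunc ℝ} (hf : f.IsStableR) (hg : g.IsStableR) :
    (f * g).IsStableR := by
  apply stableR_of_dvd (RatFunc.denom_mul_dvd f g)
  intro z hz
  simp only [Polynomial.map_mul, Polynomial.IsRoot.def, Polynomial.eval_mul,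
    mul_eq_zero] at hz
  rcases hz with h | h
  · exact hf z h
  · exact hg z h

lemma pow_rootsR (K : ℕ) (z : ℂ)
    (hz : (((X + 1 : ℝ[X]) ^ K).map (algebraMap ℝ ℂ)).IsRoot z) : z.re < 0 := by
  simp only [Polynomial.map_pow, Polynomial.map_add, Polynomial.map_X,
    Polynomial.map_one, Polynomial.IsRoot.def, Polynomial.eval_pow,
    Polynomial.eval_add, Polynomial.eval_X, Polynomial.eval_one] at hz
  have h1 : z + 1 = 0 := (pow_eq_zero_iff'.mp hz).1
  have h2 : z = -1 := eq_neg_of_add_eq_zero_left h1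
  rw [h2]
  norm_num

lemma div_properR {a b : ℝ[X]} (hb : b ≠ 0) (h : a.natDegree ≤ b.natDegree) :
    (algebraMap ℝ[X] (RatFunc ℝ) a / algebraMap ℝ[X] (RatFunc ℝ) b).IsProperR := by
  rcases eq_or_ne a 0 with rfl | ha
  · simpa using zero_properR
  set f : RatFunc ℝ := algebraMap ℝ[X] (RatFunc ℝ) a / algebraMap ℝ[X] (RatFunc ℝ) b
    with hfdef
  have hfa : algebraMap ℝ[X] (RatFunc ℝ) a ≠ 0 := RatFunc.algebraMap_ne_zero ha
  have hfb : algebraMap ℝ[X] (RatFunc ℝ) b ≠ 0 := RatFunc.algebraMap_ne_zero hb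
  have hfne : f ≠ 0 := div_ne_zero hfa hfb
  have hden : algebraMap ℝ[X] (RatFunc ℝ) f.denom ≠ 0 :=
    RatFunc.algebraMap_ne_zero f.denom_ne_zero
  have h1 : algebraMap ℝ[X] (RatFunc ℝ) f.num / algebraMap ℝ[X] (RatFunc ℝ) f.denom
      = algebraMap ℝ[X] (RatFunc ℝ) a / algebraMap ℝ[X] (RatFunc ℝ) b :=
    by rw [RatFunc.num_div_denom]
  rw [div_eq_div_iff hden hfb] at h1
  rw [← _root_.map_mul, ← _root_.map_mul] at h1
  have key : f.num * b = a * f.denom := RatFunc.algebraMap_injective (K := ℝ) h1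
  have hnum : f.num ≠ 0 := RatFunc.num_ne_zero hfne
  have hdeg := congrArg natDegree key
  rw [natDegree_mul hnum hb, natDegree_mul ha f.denom_ne_zero] at hdeg
  show f.num.natDegree ≤ f.denom.natDegree
  omega

lemma mul_div_polyR {e : RatFunc ℝ} {D q : ℝ[X]} (hq : q ≠ 0) (hd : e.denom ∣ D) :
    ∃ P : ℝ[X], (algebraMap ℝ[X] (RatFunc ℝ) D / algebraMap ℝ[X] (RatFunc ℝ) q) * e
      = algebraMap ℝ[X] (RatFunc ℝ) P / algebraMap ℝ[X] (RatFunc ℝ) q := by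
  obtain ⟨D', rfl⟩ := hd
  refine ⟨D' * e.num, ?_⟩
  have he : algebraMap ℝ[X] (RatFunc ℝ) e.denom ≠ 0 :=
    RatFunc.algebraMap_ne_zero e.denom_ne_zero
  have hq' : algebraMap ℝ[X] (RatFunc ℝ) q ≠ 0 := RatFunc.algebraMap_ne_zero hq
  have key : algebraMap ℝ[X] (RatFunc ℝ) e.denom * e = algebraMap ℝ[X] (RatFunc ℝ) e.num := by
    have h := RatFunc.num_div_denom e
    rw [div_eq_iff he] at h
    rw [mul_comm]
    exact h.symm
  rw [div_mul_eq_mul_div]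
  congr 1
  rw [_root_.map_mul, _root_.map_mul, mul_comm (algebraMap ℝ[X] (RatFunc ℝ) e.denom) _,
    mul_assoc, key]


lemma algC_ne_zero {c : ℝ} (hc : c ≠ 0) : (RatFunc.C c : RatFunc ℝ) ≠ 0 := by
  intro h
  have := congrArg (RatFunc.eval (RingHom.id ℝ) 0) h
  simp [RatFunc.eval_C] at this
  exact hc this

lemma C_properR (c : ℝ) : (RatFunc.C c : RatFunc ℝ).IsProperR := by
  simp [RatFunc.IsProperR, RatFunc.num_C, RatFunc.denom_C]

lemma C_stableR (c : ℝ) : (RatFunc.C c : RatFunc ℝ).IsStableR := by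
  intro z hz
  simp [RatFunc.denom_C, Polynomial.IsRoot.def] at hz

lemma smul_ne_zero_iff_mat {m' n' : ℕ} {φ : RatFunc ℝ} (hφ : φ ≠ 0)
    (M : Matrix (Fin m') (Fin n') (RatFunc ℝ)) : φ • M ≠ 0 ↔ M ≠ 0 := by
  constructor
  · intro h h0
    exact h (by rw [h0, smul_zero])
  · intro h h0
    apply h
    ext r s
    have h1 : φ * M r s = 0 := by
      have := congrFun (congrFun h0 r) s
      simpa [Matrix.smul_apply, smul_eq_mul] using this
    rcases mul_eq_zero.mp h1 with h2 | h2
    · exact absurd h2 hφ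
    · simpa using h2

lemma scale_filter {n mw : ℕ} (ε : ℝ) (hε : 0 < ε)
    (E : Matrix (Fin n) (Fin mw) (RatFunc ℝ)) :
    ∃ φ : RatFunc ℝ, φ ≠ 0 ∧ φ.IsProperR ∧ φ.IsStableR ∧
      (φ • E).IsStableR ∧ hinfNorm (φ • E) < ε := by
  classical
  set D : ℝ[X] := ∏ r : Fin n, ∏ j : Fin mw, (E r j).denom with hD
  have hDne : D ≠ 0 := Finset.prod_ne_zero_iff.mpr fun r _ =>
    Finset.prod_ne_zero_iff.mpr fun j _ => (E r j).denom_ne_zero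
  set K : ℕ := D.natDegree with hK
  set qq : ℝ[X] := (X + 1) ^ K with hqq
  have hXadd : (X + 1 : ℝ[X]) ≠ 0 := by
    intro h
    simpa using congrArg (Polynomial.eval (0 : ℝ)) h
  have hqqne : qq ≠ 0 := pow_ne_zero _ hXadd
  have hdegqq : qq.natDegree = K := by
    rw [hqq, Polynomial.natDegree_pow]
    have h1 : (X + 1 : ℝ[X]).natDegree = 1 := by
      simpa using Polynomial.natDegree_X_add_C (1 : ℝ)
    rw [h1, mul_one]
  set ψ : RatFunc ℝ := algebraMap ℝ[X] (RatFunc ℝ) D / algebraMap ℝ[X] (RatFunc ℝ) qq with hψ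
  have hψne : ψ ≠ 0 :=
    div_ne_zero (RatFunc.algebraMap_ne_zero hDne) (RatFunc.algebraMap_ne_zero hqqne)
  have hψproper : ψ.IsProperR := div_properR hqqne (by rw [hdegqq])
  have hψstable : ψ.IsStableR :=
    stableR_of_dvd (RatFunc.denom_div_dvd D qq) (pow_rootsR K)
  have hdvd : ∀ r j, ((E r j).denom) ∣ D := by
    intro r j
    have ha : (E r j).denom ∣ ∏ j' : Fin mw, (E r j').denom :=
      Finset.dvd_prod_of_mem (fun j' => (E r j').denom) (Finset.mem_univ j)
    have hb : (∏ j' : Fin mw, (E r j').denom) ∣ D :=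
      Finset.dvd_prod_of_mem (fun r' => ∏ j' : Fin mw, (E r' j').denom) (Finset.mem_univ r)
    exact dvd_trans ha hb
  have hgstableM : (ψ • E).IsStableR := by
    intro r j
    have hg : (ψ * E r j).IsStableR := by
      obtain ⟨P, hP⟩ := mul_div_polyR hqqne (hdvd r j)
      rw [hψ, hP]
      exact stableR_of_dvd (RatFunc.denom_div_dvd P qq) (pow_rootsR K)
    simpa [Matrix.smul_apply, smul_eq_mul] using hg
  set M : ℝ := hinfNorm (ψ • E) with hM
  have hM0 : 0 ≤ M := by
    apply Real.iSup_nonneg; intro ω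
    apply Real.iSup_nonneg; intro r
    apply Real.iSup_nonneg; intro j
    exact norm_nonneg _
  set c : ℝ := ε / (2 * (M + 1)) with hc
  have hcpos : 0 < c := div_pos hε (by linarith)
  have hCne : (RatFunc.C c : RatFunc ℝ) ≠ 0 := algC_ne_zero (ne_of_gt hcpos)
  refine ⟨RatFunc.C c * ψ, mul_ne_zero hCne hψne,
    isProperR_mul (C_properR c) hψproper, isStableR_mul (C_stableR c) hψstable, ?_, ?_⟩
  · intro r j
    rw [mul_smul, Matrix.smul_apply, smul_eq_mul]
    exact isStableR_mul (C_stableR c) (hgstableM r j)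
  · have heval : ∀ (ω : ℝ) (r : Fin n) (j : Fin mw),
        ‖RatFunc.eval (algebraMap ℝ ℂ) (Complex.I * ω)
          (((RatFunc.C c * ψ) • E) r j)‖
        = |c| * ‖RatFunc.eval (algebraMap ℝ ℂ) (Complex.I * ω) ((ψ • E) r j)‖ := by
      intro ω r j
      have h1 : Polynomial.eval₂ (algebraMap ℝ ℂ) (Complex.I * ω)
          (RatFunc.C c : RatFunc ℝ).denom ≠ 0 := by
        simp [RatFunc.denom_C]
      have h2 : Polynomial.eval₂ (algebraMap ℝ ℂ) (Complex.I * ω) ((ψ • E) r j).denom ≠ 0 := by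
        intro h0
        have hroot : (((ψ • E) r j).denom.map (algebraMap ℝ ℂ)).IsRoot (Complex.I * ω) := by
          rwa [Polynomial.IsRoot.def, Polynomial.eval_map]
        have hlt := hgstableM r j _ hroot
        have hre : (Complex.I * (ω : ℂ)).re = 0 := by simp [Complex.mul_re]
        linarith
      have hentry : ((RatFunc.C c * ψ) • E) r j = RatFunc.C c * ((ψ • E) r j) := by
        simp [Matrix.smul_apply, smul_eq_mul, mul_assoc]
      rw [hentry, RatFunc.eval_mul _ _ h1 h2, norm_mul, RatFunc.eval_C]
      congr 1
      simp [Complex.norm_real]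
    have hnorm : hinfNorm ((RatFunc.C c * ψ) • E) = |c| * M := by
      rw [hM]
      show (⨆ ω : ℝ, ⨆ r : Fin n, ⨆ j : Fin mw, ‖
          RatFunc.eval (algebraMap ℝ ℂ) (Complex.I * ω) (((RatFunc.C c * ψ) • E) r j)‖)
        = |c| * hinfNorm (ψ • E)
      simp only [heval]
      rw [hinfNorm]
      simp only [← Real.mul_iSup_of_nonneg (abs_nonneg c)]
    rw [hnorm, abs_of_pos hcpos]
    have h1 : c * M < c * (M + 1) := by nlinarith
    have h2 : c * (M + 1) = ε / 2 := by
      rw [hc]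
      field_simp
    linarith

/-- **Solvability of the strict AFDIP**: the strict AFDIP is solvable iff the
EFDIP is solvable, i.e., iff the system is `S`-fault isolable. -/
theorem strict_afdip_solvable_iff_efdip
    (p mu md mf mw nb : ℕ)
    (Gu : Matrix (Fin p) (Fin mu) (RatFunc ℝ))
    (Gd : Matrix (Fin p) (Fin md) (RatFunc ℝ))
    (Gf : Matrix (Fin p) (Fin mf) (RatFunc ℝ))
    (Gw : Matrix (Fin p) (Fin mw) (RatFunc ℝ))
    (S : Fin nb → Fin mf → Bool) :
    StrictAFDIPSolvable Gu Gd Gf Gw S ↔ EFDIPSolvable Gu Gd Gf S := by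
  constructor
  · intro h
    obtain ⟨q, Q, hQ⟩ := h 1 one_pos
    exact ⟨q, Q, fun i => ⟨(hQ i).1, (hQ i).2.1, (hQ i).2.2.1, (hQ i).2.2.2.1,
      (hQ i).2.2.2.2.1, (hQ i).2.2.2.2.2.2.1⟩⟩
  · intro h ε hε
    obtain ⟨q, Q, hQ⟩ := h
    choose φ hφne hφp hφs hφEs hφEn using fun i =>
      scale_filter ε hε (Q i * Matrix.fromRows Gw (0 : Matrix (Fin mu) (Fin mw) (RatFunc ℝ)))
    refine ⟨q, fun i => φ i • Q i, fun i => ?_⟩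
    dsimp only
    obtain ⟨h1, h2, h3, h4, h5, h6⟩ := hQ i
    refine ⟨?_, ?_, ?_, ?_, ?_, ?_, ?_, ?_⟩
    · intro r s
      rw [Matrix.smul_apply, smul_eq_mul]
      exact isProperR_mul (hφp i) (h1 r s)
    · intro r s
      rw [Matrix.smul_apply, smul_eq_mul]
      exact isStableR_mul (hφs i) (h2 r s)
    · rw [Matrix.smul_mul, h3, smul_zero]
    · rw [Matrix.smul_mul, h4, smul_zero]
    · rw [Matrix.smul_mul]
      intro r s
      rw [Matrix.smul_apply, smul_eq_mul]
      exact isStableR_mul (hφs i) (h5 r s)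
    · rw [Matrix.smul_mul]
      exact hφEs i
    · intro j
      rw [Matrix.smul_mul, ← h6 j]
      exact smul_ne_zero_iff_mat (hφne i) _
    · rw [Matrix.smul_mul]
      exact hφEn i

end
end

section
/- The multiple model consisting of N systems y^{(j)} = G_u^{(j)} u + G_d^{(j)} d^{(j)} (no noise) is extended model detectable if and only if for every i = 1,…,N and every j ≠ i, rank [G_d^{(i)}(λ) G_d^{(j)}(λ) G_u^{(i)}(λ) − G_u^{(j)}(λ)] > rank G_d^{(i)}(λ) (normal ranks over rational functions). -/
/-!
Statement 13: The multiple model consisting of N systems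
y^{(j)} = G_u^{(j)} u + G_d^{(j)} d^{(j)} (no noise) is extended model detectable
if and only if for every i and every j ≠ i,
rank [G_d^{(i)}  G_d^{(j)}  G_u^{(i)} − G_u^{(j)}] > rank G_d^{(i)}
(normal ranks over rational functions).
-/

open Matrix Polynomial

noncomputable section

section Aux

variable {F : Type*} [Field F]

lemma matrix_ne_zero_iff {m n : Type*} (M : Matrix m n F) :
    M ≠ 0 ↔ ∃ i j, M i j ≠ 0 := by
  constructor
  · intro h
    by_contra hc
    push_neg at hc
    exact h (by ext i j; simpa using hc i j)
  · rintro ⟨i, j, h⟩ rfl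
    exact h rfl

lemma fromColumns_eq_zero_iff {m n₁ n₂ : Type*} (A : Matrix m n₁ F) (B : Matrix m n₂ F) :
    fromCols A B = 0 ↔ A = 0 ∧ B = 0 := by
  rw [← fromCols_zero]
  exact fromCols_inj.eq_iff

lemma mul_row {m n o : Type*} [Fintype n] (M : Matrix m n F) (N : Matrix n o F) (k : m) :
    (M * N) k = (M k) ᵥ* N := by
  funext j
  simp [Matrix.mul_apply, Matrix.vecMul, dotProduct]

lemma vecMul_fromColumns_eq_zero_iff {m n₁ n₂ : Type*} [Fintype m]
    (A : Matrix m n₁ F) (B : Matrix m n₂ F) (v : m → F) :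
    v ᵥ* fromCols A B = 0 ↔ v ᵥ* A = 0 ∧ v ᵥ* B = 0 := by
  rw [vecMul_fromCols]
  constructor
  · intro h
    exact ⟨funext fun j => congrFun h (Sum.inl j), funext fun j => congrFun h (Sum.inr j)⟩
  · rintro ⟨h1, h2⟩
    funext j
    cases j with
    | inl j => exact congrFun h1 j
    | inr j => exact congrFun h2 j

lemma rank_eq_finrank_range_vecMulLinear {p : ℕ} {n : Type*} [Fintype n]
    (A : Matrix (Fin p) n F) :
    A.rank = Module.finrank F (LinearMap.range A.vecMulLinear) := by
  rw [← Matrix.rank_transpose A]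
  have : Aᵀ.mulVecLin = A.vecMulLinear := by
    ext v
    simp [Matrix.mulVec_transpose]
  rw [Matrix.rank, this]

lemma rank_lt_fromColumns_iff {p : ℕ} {n n' : Type*} [Fintype n] [Fintype n']
    (A : Matrix (Fin p) n F) (B : Matrix (Fin p) n' F) :
    A.rank < (fromCols A B).rank ↔ ∃ v : Fin p → F, v ᵥ* A = 0 ∧ v ᵥ* B ≠ 0 := by
  set LA := A.vecMulLinear with hLA
  set LM := (fromCols A B).vecMulLinear with hLM
  have hker : LinearMap.ker LM ≤ LinearMap.ker LA := by
    intro v hv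
    rw [LinearMap.mem_ker] at hv ⊢
    rw [hLM, Matrix.vecMulLinear_apply, vecMul_fromColumns_eq_zero_iff] at hv
    rw [hLA, Matrix.vecMulLinear_apply]
    exact hv.1
  have hA : A.rank + Module.finrank F (LinearMap.ker LA) = p := by
    rw [rank_eq_finrank_range_vecMulLinear]
    have := LinearMap.finrank_range_add_finrank_ker LA
    rw [Module.finrank_pi, Fintype.card_fin] at this
    exact this
  have hM : (fromCols A B).rank + Module.finrank F (LinearMap.ker LM) = p := by
    rw [rank_eq_finrank_range_vecMulLinear]
    have := LinearMap.finrank_range_add_finrank_ker LM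
    rw [Module.finrank_pi, Fintype.card_fin] at this
    exact this
  have step1 : A.rank < (fromCols A B).rank ↔
      Module.finrank F (LinearMap.ker LM) < Module.finrank F (LinearMap.ker LA) := by omega
  rw [step1]
  constructor
  · intro hlt
    have : LinearMap.ker LM < LinearMap.ker LA :=
      lt_of_le_of_ne hker (fun he => by rw [he] at hlt; exact lt_irrefl _ hlt)
    obtain ⟨v, hv1, hv2⟩ := SetLike.exists_of_lt this
    refine ⟨v, ?_, ?_⟩
    · simpa [hLA, LinearMap.mem_ker] using hv1
    · intro hB
      apply hv2
      rw [LinearMap.mem_ker, hLM, Matrix.vecMulLinear_apply, vecMul_fromColumns_eq_zero_iff]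
      exact ⟨by simpa [hLA, LinearMap.mem_ker] using hv1, hB⟩
  · rintro ⟨v, hv1, hv2⟩
    have hlt : LinearMap.ker LM < LinearMap.ker LA := by
      refine lt_of_le_of_ne hker (fun he => ?_)
      have hvA : v ∈ LinearMap.ker LA := by
        rw [LinearMap.mem_ker, hLA, Matrix.vecMulLinear_apply]
        exact hv1
      rw [← he, LinearMap.mem_ker, hLM, Matrix.vecMulLinear_apply,
        vecMul_fromColumns_eq_zero_iff] at hvA
      exact hv2 hvA.2
    exact Submodule.finrank_lt_finrank_of_lt hlt

lemma rank_fromColumns_assoc {p : ℕ} {n₁ n₂ n₃ : Type*} [Fintype n₁] [Fintype n₂] [Fintype n₃]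
    (A : Matrix (Fin p) n₁ F) (B : Matrix (Fin p) n₂ F) (C : Matrix (Fin p) n₃ F) :
    (fromCols (fromCols A B) C).rank = (fromCols A (fromCols B C)).rank := by
  have hset : Set.range (fromCols (fromCols A B) C).col =
      Set.range (fromCols A (fromCols B C)).col := by
    ext x
    simp only [Set.mem_range]
    constructor
    · rintro ⟨(j | j) | j, rfl⟩
      exacts [⟨Sum.inl j, rfl⟩, ⟨Sum.inr (Sum.inl j), rfl⟩, ⟨Sum.inr (Sum.inr j), rfl⟩]
    · rintro ⟨j | (j | j), rfl⟩
      exacts [⟨Sum.inl (Sum.inl j), rfl⟩, ⟨Sum.inl (Sum.inr j), rfl⟩, ⟨Sum.inr j, rfl⟩]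
  rw [Matrix.rank_eq_finrank_span_cols, Matrix.rank_eq_finrank_span_cols, hset]

lemma mul_plant {q' p mu md : ℕ} (Q : Matrix (Fin q') (Fin p ⊕ Fin mu) F)
    (Gu : Matrix (Fin p) (Fin mu) F) (Gd : Matrix (Fin p) (Fin md) F) :
    Q * Matrix.fromRows (Matrix.fromCols Gu Gd)
        (Matrix.fromCols (1 : Matrix (Fin mu) (Fin mu) F)
          (0 : Matrix (Fin mu) (Fin md) F)) =
      fromCols (Q.toCols₁ * Gu + Q.toCols₂) (Q.toCols₁ * Gd) := by
  ext k s
  cases s with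
  | inl u =>
    simp [Matrix.mul_apply, Fintype.sum_sum_type, Matrix.fromRows_apply_inl, Matrix.fromRows_apply_inr, Matrix.fromCols_apply_inl,
      Matrix.fromCols_apply_inr,
      Matrix.toCols₁, Matrix.toCols₂, Matrix.one_apply, mul_ite,
      Finset.sum_ite_eq' Finset.univ u]
  | inr d =>
    simp [Matrix.mul_apply, Fintype.sum_sum_type, Matrix.fromRows_apply_inl, Matrix.fromRows_apply_inr, Matrix.fromCols_apply_inl,
      Matrix.fromCols_apply_inr,
      Matrix.toCols₁, Matrix.toCols₂]

end Aux

lemma properR_stableR_div (a : ℝ[X]) (e : ℕ) (h : a.natDegree ≤ e) :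
    (algebraMap ℝ[X] (RatFunc ℝ) a / algebraMap ℝ[X] (RatFunc ℝ) ((X + 1) ^ e)).IsProperR ∧
    (algebraMap ℝ[X] (RatFunc ℝ) a / algebraMap ℝ[X] (RatFunc ℝ) ((X + 1) ^ e)).IsStableR := by
  have hX1 : (X + 1 : ℝ[X]).Monic := by
    simpa using Polynomial.monic_X_add_C (1 : ℝ)
  have hq : ((X + 1 : ℝ[X]) ^ e) ≠ 0 := pow_ne_zero _ hX1.ne_zero
  have hqdeg : ((X + 1 : ℝ[X]) ^ e).natDegree = e := by
    rw [Polynomial.natDegree_pow]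
    have : (X + 1 : ℝ[X]).natDegree = 1 := by
      simpa using Polynomial.natDegree_X_add_C (1 : ℝ)
    rw [this, mul_one]
  set f := algebraMap ℝ[X] (RatFunc ℝ) a / algebraMap ℝ[X] (RatFunc ℝ) ((X + 1) ^ e) with hf
  have key : f.num * ((X + 1) ^ e) = a * f.denom :=
    (RatFunc.num_mul_eq_mul_denom_iff hq).mpr rfl
  have hden : f.denom ∣ (X + 1) ^ e := (RatFunc.denom_dvd hq).mpr ⟨a, rfl⟩
  constructor
  · by_cases h0 : f.num = 0
    · simp [RatFunc.IsProperR, h0]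
    · have hd0 : f.denom ≠ 0 := f.denom_ne_zero
      have ha : a ≠ 0 := by
        rintro rfl
        rw [zero_mul] at key
        exact h0 (by simpa [hq] using mul_eq_zero.mp key)
      have hdeg := congrArg Polynomial.natDegree key
      rw [Polynomial.natDegree_mul h0 hq, Polynomial.natDegree_mul ha hd0, hqdeg] at hdeg
      unfold RatFunc.IsProperR
      omega
  · intro z hz
    have hdvd : f.denom.map (algebraMap ℝ ℂ) ∣ ((X + 1 : ℝ[X]) ^ e).map (algebraMap ℝ ℂ) :=
      Polynomial.map_dvd _ hden
    have hz2 : (((X + 1 : ℝ[X]) ^ e).map (algebraMap ℝ ℂ)).IsRoot z := hz.dvd hdvd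
    rw [Polynomial.map_pow, Polynomial.map_add, Polynomial.map_X, Polynomial.map_one] at hz2
    have hzz : (z + 1) ^ e = 0 := by simpa [Polynomial.IsRoot] using hz2
    have he : z + 1 = 0 := by
      rcases pow_eq_zero_iff'.mp hzz with ⟨h1, -⟩
      exact h1
    have : z = -1 := by linear_combination he
    rw [this]
    norm_num

lemma exists_scale {ι : Type*} [Fintype ι] (w : ι → RatFunc ℝ) :
    ∃ c : RatFunc ℝ, c ≠ 0 ∧ ∀ l, (c * w l).IsProperR ∧ (c * w l).IsStableR := by
  classical
  set D : ℝ[X] := ∏ l, (w l).denom with hD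
  have hD0 : D ≠ 0 := Finset.prod_ne_zero_iff.mpr fun l _ => (w l).denom_ne_zero
  set e : ℕ := D.natDegree + Finset.univ.sup (fun l => (w l).num.natDegree) with he
  have hX1 : (X + 1 : ℝ[X]).Monic := by simpa using Polynomial.monic_X_add_C (1 : ℝ)
  have hP0 : ((X + 1 : ℝ[X]) ^ e) ≠ 0 := pow_ne_zero _ hX1.ne_zero
  refine ⟨algebraMap ℝ[X] (RatFunc ℝ) D / algebraMap ℝ[X] (RatFunc ℝ) ((X + 1) ^ e),
    div_ne_zero (RatFunc.algebraMap_ne_zero hD0) (RatFunc.algebraMap_ne_zero hP0), fun l => ?_⟩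
  have hdvd : (w l).denom ∣ D := Finset.dvd_prod_of_mem _ (Finset.mem_univ l)
  have hfac : (w l).denom * (D / (w l).denom) = D :=
    EuclideanDomain.mul_div_cancel' (w l).denom_ne_zero hdvd
  have hrewrite :
      algebraMap ℝ[X] (RatFunc ℝ) D / algebraMap ℝ[X] (RatFunc ℝ) ((X + 1) ^ e) * w l =
      algebraMap ℝ[X] (RatFunc ℝ) ((w l).num * (D / (w l).denom)) /
        algebraMap ℝ[X] (RatFunc ℝ) ((X + 1) ^ e) := by
    conv_lhs => rw [← RatFunc.num_div_denom (w l)]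
    rw [div_mul_div_comm, ← _root_.map_mul, ← _root_.map_mul,
      div_eq_div_iff
        (RatFunc.algebraMap_ne_zero (mul_ne_zero hP0 (w l).denom_ne_zero))
        (RatFunc.algebraMap_ne_zero hP0),
      ← _root_.map_mul, ← _root_.map_mul]
    exact congrArg _ (by linear_combination (-((X + 1 : ℝ[X]) ^ e * (w l).num)) * hfac)
  rw [hrewrite]
  apply properR_stableR_div
  have h1 : (D / (w l).denom).natDegree ≤ D.natDegree := by
    have hq0 : D / (w l).denom ≠ 0 := by
      intro h0
      rw [h0, mul_zero] at hfac
      exact hD0 hfac.symm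
    have := congrArg Polynomial.natDegree hfac
    rw [Polynomial.natDegree_mul (w l).denom_ne_zero hq0] at this
    omega
  have h2 : (w l).num.natDegree ≤ Finset.univ.sup (fun l => (w l).num.natDegree) :=
    Finset.le_sup (f := fun l => (w l).num.natDegree) (Finset.mem_univ l)
  calc ((w l).num * (D / (w l).denom)).natDegree
      ≤ (w l).num.natDegree + (D / (w l).denom).natDegree := Polynomial.natDegree_mul_le
    _ ≤ e := by omega

set_option maxHeartbeats 1000000 in
set_option synthInstance.maxHeartbeats 200000 in
set_option maxHeartbeats 1000000 in
set_option synthInstance.maxHeartbeats 200000 in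
/-- **Characterization of extended model detectability**. -/
theorem extended_model_detectable_iff_rank
    (N p mu : ℕ) (md : Fin N → ℕ)
    (Gu : ∀ _ : Fin N, Matrix (Fin p) (Fin mu) (RatFunc ℝ))
    (Gd : ∀ j : Fin N, Matrix (Fin p) (Fin (md j)) (RatFunc ℝ)) :
    (∃ (q : Fin N → ℕ)
        (Q : ∀ i : Fin N, Matrix (Fin (q i)) (Fin p ⊕ Fin mu) (RatFunc ℝ)),
        (∀ i : Fin N, (Q i).IsProperR ∧ (Q i).IsStableR) ∧
        (∀ i : Fin N,
          Q i * Matrix.fromRows (Matrix.fromCols (Gu i) (Gd i))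
            (Matrix.fromCols (1 : Matrix (Fin mu) (Fin mu) (RatFunc ℝ))
              (0 : Matrix (Fin mu) (Fin (md i)) (RatFunc ℝ))) = 0) ∧
        (∀ i j : Fin N, i ≠ j →
          Q i * Matrix.fromRows (Matrix.fromCols (Gu j) (Gd j))
            (Matrix.fromCols (1 : Matrix (Fin mu) (Fin mu) (RatFunc ℝ))
              (0 : Matrix (Fin mu) (Fin (md j)) (RatFunc ℝ))) ≠ 0)) ↔
      ∀ i j : Fin N, j ≠ i →
        (Gd i).rank <
          (Matrix.fromCols (Matrix.fromCols (Gd i) (Gd j))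
            (Gu i - Gu j)).rank := by
  constructor
  · rintro ⟨q, Q, -, hii, hij⟩ i j hji
    have hPi := hii i
    have hPj := hij i j (Ne.symm hji)
    rw [mul_plant] at hPi hPj
    rw [fromColumns_eq_zero_iff] at hPi
    obtain ⟨h1, h2⟩ := hPi
    rw [rank_fromColumns_assoc, rank_lt_fromColumns_iff]
    rw [Ne, fromColumns_eq_zero_iff, not_and_or] at hPj
    have hQu : (Q i).toCols₂ = -((Q i).toCols₁ * Gu i) :=
      eq_neg_of_add_eq_zero_right h1
    have hfirst : (Q i).toCols₁ * Gu j + (Q i).toCols₂ =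
        (Q i).toCols₁ * (Gu j - Gu i) := by
      rw [hQu, Matrix.mul_sub, sub_eq_add_neg]
    rcases hPj with hA | hB
    · rw [hfirst] at hA
      obtain ⟨k, u, hk⟩ := (matrix_ne_zero_iff _).mp hA
      refine ⟨(Q i).toCols₁ k, ?_, ?_⟩
      · rw [← mul_row, h2]
        rfl
      · intro hzero
        rw [vecMul_fromColumns_eq_zero_iff] at hzero
        apply hk
        have : (Q i).toCols₁ k ᵥ* (Gu j - Gu i) = 0 := by
          rw [← neg_sub (Gu i) (Gu j), Matrix.vecMul_neg, hzero.2, neg_zero]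
        rw [← mul_row] at this
        exact congrFun this u
    · obtain ⟨k, d, hk⟩ := (matrix_ne_zero_iff _).mp hB
      refine ⟨(Q i).toCols₁ k, ?_, ?_⟩
      · rw [← mul_row, h2]
        rfl
      · intro hzero
        rw [vecMul_fromColumns_eq_zero_iff] at hzero
        apply hk
        have := hzero.1
        rw [← mul_row] at this
        exact congrFun this d
  · intro h
    classical
    let W : ∀ _ : Fin N, Submodule (RatFunc ℝ) (Fin p → RatFunc ℝ) :=
      fun i => LinearMap.ker ((Gd i).vecMulLinear)
    let q : Fin N → ℕ := fun i => Module.finrank (RatFunc ℝ) (W i)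
    let b : ∀ i, Module.Basis (Fin (q i)) (RatFunc ℝ) (W i) := fun i => Module.finBasis (RatFunc ℝ) (W i)
    let Qy : ∀ i, Matrix (Fin (q i)) (Fin p) (RatFunc ℝ) :=
      fun i => Matrix.of fun k => (b i k : Fin p → RatFunc ℝ)
    let Q0 : ∀ i, Matrix (Fin (q i)) (Fin p ⊕ Fin mu) (RatFunc ℝ) :=
      fun i => fromCols (Qy i) (-(Qy i * Gu i))
    choose c hc0 hcps using fun (i : Fin N) (k : Fin (q i)) => exists_scale (Q0 i k)
    have hQyGd : ∀ i, Qy i * Gd i = 0 := by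
      intro i
      ext k d
      have hmem := (b i k).2
      rw [LinearMap.mem_ker, Matrix.vecMulLinear_apply] at hmem
      have := congrFun (mul_row (Qy i) (Gd i) k) d
      rw [this]
      exact congrFun hmem d
    have hdiag : ∀ i, (Matrix.of fun k l => c i k * Q0 i k l) = Matrix.diagonal (c i) * Q0 i := by
      intro i
      ext k l
      simp [Matrix.mul_apply, Matrix.diagonal_apply, ite_mul, Finset.sum_ite_eq]
    refine ⟨q, fun i => Matrix.of fun k l => c i k * Q0 i k l, ?_, ?_, ?_⟩
    · intro i
      exact ⟨fun k l => (hcps i k l).1, fun k l => (hcps i k l).2⟩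
    · intro i
      beta_reduce
      rw [hdiag, Matrix.mul_assoc, mul_plant, toCols₁_fromCols, toCols₂_fromCols,
        add_neg_cancel, hQyGd i, fromCols_zero, Matrix.mul_zero]
    · intro i j hij hzero
      beta_reduce at hzero
      rw [hdiag, Matrix.mul_assoc] at hzero
      have h0 : Q0 i * Matrix.fromRows (Matrix.fromCols (Gu j) (Gd j))
          (Matrix.fromCols (1 : Matrix (Fin mu) (Fin mu) (RatFunc ℝ))
            (0 : Matrix (Fin mu) (Fin (md j)) (RatFunc ℝ))) = 0 := by
        ext k l
        have hentry := congrFun (congrFun hzero k) l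
        rw [Matrix.mul_apply] at hentry
        simp only [Matrix.diagonal_apply, ite_mul, zero_mul, Finset.sum_ite_eq,
          Finset.mem_univ, if_true] at hentry
        exact (mul_eq_zero.mp hentry).resolve_left (hc0 i k)
      rw [mul_plant, toCols₁_fromCols, toCols₂_fromCols,
        fromColumns_eq_zero_iff] at h0
      obtain ⟨hA, hB⟩ := h0
      have hrk := h i j (Ne.symm hij)
      rw [rank_fromColumns_assoc, rank_lt_fromColumns_iff] at hrk
      obtain ⟨v, hv1, hv2⟩ := hrk
      have hvW : v ∈ W i := by
        rw [LinearMap.mem_ker, Matrix.vecMulLinear_apply]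
        exact hv1
      apply hv2
      set B := fromCols (Gd j) (Gu i - Gu j) with hBdef
      have hrows : ∀ k, (Qy i k) ᵥ* B = 0 := by
        intro k
        rw [hBdef, vecMul_fromColumns_eq_zero_iff]
        constructor
        · rw [← mul_row, hB]
          rfl
        · have hA' : Qy i * Gu i = Qy i * Gu j := by
            have := eq_neg_of_add_eq_zero_left hA
            rw [neg_neg] at this
            exact this.symm
          rw [← mul_row, Matrix.mul_sub, hA', sub_self]
          rfl
      have hsum : v = ∑ k, (b i).repr ⟨v, hvW⟩ k • (Qy i k) := by
        have hrepr := (b i).sum_repr ⟨v, hvW⟩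
        have := congrArg (Submodule.subtype (W i)) hrepr
        simp only [map_sum, _root_.map_smul, Submodule.coe_subtype] at this
        exact this.symm
      rw [← Matrix.vecMulLinear_apply, hsum, map_sum]
      simp only [_root_.map_smul, Matrix.vecMulLinear_apply, hrows, smul_zero]
      exact Finset.sum_const_zero

end
end
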